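/- arXiv:math/0010291 — 2 statements merged into one kernel-verified Lean document; each statement's English description precedes it below -/
import Mathlib

section
/- Let V : ℝ → ℝ be an even C² function with 0 ≤ V''(x) ≤ 1 for all x. Let μ be a probability measure on ℝ^Λ (Λ finite) with density proportional to exp[-(1/2) Σ_{x,y} p(x-y) V(φ_x - φ_y)] with zero boundary conditions outside Λ, where p is a symmetric probability kernel. Then for any x ∈ Λ and any A ⊆ Λ\{x}, the ratio Z_Λ(A ∪ {x}) / Z_Λ(A) = μ_Λ(|φ_x| ≤ a | |φ_z| ≤ a ∀z ∈ A) satisfies Z_Λ(A∪{x})/Z_Λ(A) ≤ 2a/√(2π). -/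
open MeasureTheory Real

/-- Extension of a configuration on a finite set `Λ` by zero boundary conditions. -/
noncomputable def extendBy {d : ℕ} (Λ : Finset (Fin d → ℤ))
    (φ : {x // x ∈ Λ} → ℝ) : (Fin d → ℤ) → ℝ :=
  fun x => if h : x ∈ Λ then φ ⟨x, h⟩ else 0

/-- The gradient Hamiltonian `(1/2) ∑_{x,y} p(x-y) V(ψ_x - ψ_y)` in the volume `Λ`
(only pairs touching `Λ` contribute; outside `Λ` the field is frozen to `0`). -/
noncomputable def hamiltonian {d : ℕ} (p : (Fin d → ℤ) → ℝ)
    (V : ℝ → ℝ) (Λ : Finset (Fin d → ℤ)) (ψ : (Fin d → ℤ) → ℝ) : ℝ :=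
  (1 / 2) * ∑' q : (Fin d → ℤ) × (Fin d → ℤ),
    if q.1 ∈ Λ ∨ q.2 ∈ Λ then p (q.1 - q.2) * V (ψ q.1 - ψ q.2) else 0

/-- The constrained partition function
`Z_Λ(A) = Z_Λ μ_Λ(|φ_z| ≤ a ∀ z ∈ A)`. -/
noncomputable def constrainedZ {d : ℕ} (p : (Fin d → ℤ) → ℝ) (V : ℝ → ℝ)
    (Λ : Finset (Fin d → ℤ)) (a : ℝ) (A : Finset (Fin d → ℤ)) : ℝ :=
  ∫ φ : {x // x ∈ Λ} → ℝ in {φ | ∀ z ∈ A, |extendBy Λ φ z| ≤ a},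
    Real.exp (-(hamiltonian p V Λ (extendBy Λ φ)))


variable {d : ℕ}


lemma quad_upper {V : ℝ → ℝ} (hV : ContDiff ℝ 2 V)
    (h1 : ∀ t, iteratedDeriv 2 V t ≤ 1) (s t : ℝ) :
    V t ≤ V s + deriv V s * (t - s) + (t - s)^2 / 2 := by
  have hd1 : Differentiable ℝ V := hV.differentiable (by norm_num)
  have hVd : ContDiff ℝ 1 (deriv V) := by
    have := (contDiff_succ_iff_deriv (n := 1)).mp hV
    exact this.2.2
  have hd2 : Differentiable ℝ (deriv V) := hVd.differentiable (by norm_num)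
  have h2 : ∀ u, deriv (deriv V) u ≤ 1 := by
    intro u
    have : iteratedDeriv 2 V = deriv (deriv V) := by
      rw [show (2:ℕ) = 0 + 1 + 1 from rfl, iteratedDeriv_succ, iteratedDeriv_succ,
        iteratedDeriv_zero]
    simpa [this] using h1 u
  set φ : ℝ → ℝ := fun u => deriv V s + (u - s) - deriv V u with hφ
  have hφd : ∀ u, HasDerivAt φ (1 - deriv (deriv V) u) u := by
    intro u
    have h' : HasDerivAt (fun u : ℝ => deriv V s + (u - s)) 1 u := by
      simpa using ((hasDerivAt_id u).sub_const s).const_add (deriv V s)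
    exact h'.sub (hd2 u).hasDerivAt
  have hφmono : Monotone φ :=
    monotone_of_hasDerivAt_nonneg hφd (fun u => by simp; linarith [h2 u])
  have hφs : φ s = 0 := by simp [hφ]
  set g : ℝ → ℝ := fun u => V s + deriv V s * (u - s) + (u - s)^2/2 - V u with hg
  have hgd : ∀ u, HasDerivAt g (φ u) u := by
    intro u
    have hA : HasDerivAt (fun u : ℝ => deriv V s * (u - s)) (deriv V s) u := by
      simpa using ((hasDerivAt_id u).sub_const s).const_mul (deriv V s)
    have hB : HasDerivAt (fun u : ℝ => (u - s)^2/2) (u - s) u := by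
      have := (((hasDerivAt_id u).sub_const s).pow 2).div_const 2
      simpa using this.congr_deriv (by simp)
    have := ((hA.const_add (V s)).add hB).sub (hd1 u).hasDerivAt
    exact this
  have hgcont : Continuous g := by
    have : Differentiable ℝ g := fun u => (hgd u).differentiableAt
    exact this.continuous
  have key : 0 ≤ g t := by
    rcases le_total s t with h | h
    · have hm : MonotoneOn g (Set.Ici s) := by
        apply monotoneOn_of_hasDerivWithinAt_nonneg (convex_Ici s) hgcont.continuousOn
          (f' := φ) (fun u hu => (hgd u).hasDerivWithinAt)
        intro u hu
        rw [interior_Ici] at hu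
        have := hφmono (le_of_lt hu)
        linarith [hφs ▸ this]
      have := hm (Set.self_mem_Ici) (Set.mem_Ici.mpr h) h
      simpa [hg] using this
    · have hm : AntitoneOn g (Set.Iic s) := by
        apply antitoneOn_of_hasDerivWithinAt_nonpos (convex_Iic s) hgcont.continuousOn
          (f' := φ) (fun u hu => (hgd u).hasDerivWithinAt)
        intro u hu
        rw [interior_Iic] at hu
        have := hφmono (le_of_lt hu)
        linarith [hφs ▸ this]
      have := hm (Set.mem_Iic.mpr h) (Set.self_mem_Iic) h
      simpa [hg] using this
  simp only [hg] at key
  linarith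


lemma slice_bound {g : ℝ → ℝ} (hg0 : ∀ t, 0 ≤ g t) (L : ℝ → ℝ)
    (hb : ∀ s t, g s * Real.exp (-(L s * (t - s)) - (t - s)^2/2) ≤ g t)
    {a : ℝ} (ha : 0 < a) :
    ∫⁻ t in {t : ℝ | |t| ≤ a}, ENNReal.ofReal (g t) ≤
      ENNReal.ofReal (2*a/Real.sqrt (2*π)) * ∫⁻ t, ENNReal.ofReal (g t) := by
  have h2pi : (0:ℝ) < 2 * π := by positivity
  have sqpos : 0 < Real.sqrt (2*π) := Real.sqrt_pos.mpr h2pi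
  have key : ∀ s, ENNReal.ofReal (g s) * ENNReal.ofReal (Real.sqrt (2*π)) ≤
      ∫⁻ t, ENNReal.ofReal (g t) := by
    intro s
    have heq : (fun t : ℝ => Real.exp (-(L s * (t - s)) - (t - s)^2/2)) =
        fun t : ℝ => Real.exp ((L s)^2/2) * Real.exp (-(1/2) * (t - (s - L s))^2) := by
      funext t
      rw [← Real.exp_add]
      congr 1
      ring
    have hint : Integrable (fun t : ℝ => Real.exp (-(L s * (t - s)) - (t - s)^2/2)) := by
      rw [heq]
      exact ((integrable_exp_neg_mul_sq (by norm_num : (0:ℝ) < 1/2)).comp_sub_right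
        (s - L s)).const_mul _
    have hval : ∫ t : ℝ, Real.exp (-(L s * (t - s)) - (t - s)^2/2) =
        Real.exp ((L s)^2/2) * Real.sqrt (2*π) := by
      rw [heq, integral_const_mul, integral_sub_right_eq_self
        (fun u => Real.exp (-(1/2) * u^2)) (s - L s), integral_gaussian]
      congr 2
      rw [div_div_eq_mul_div]
      ring
    have hexp1 : Real.sqrt (2*π) ≤ Real.exp ((L s)^2/2) * Real.sqrt (2*π) := by
      nlinarith [Real.one_le_exp (by positivity : (0:ℝ) ≤ (L s)^2/2), sqpos]
    calc ENNReal.ofReal (g s) * ENNReal.ofReal (Real.sqrt (2*π))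
        ≤ ENNReal.ofReal (g s) * ENNReal.ofReal (Real.exp ((L s)^2/2) * Real.sqrt (2*π)) := by
          exact mul_le_mul_right (ENNReal.ofReal_le_ofReal hexp1) _
      _ = ENNReal.ofReal (g s) *
          ∫⁻ t, ENNReal.ofReal (Real.exp (-(L s * (t - s)) - (t - s)^2/2)) := by
          rw [← hval, ofReal_integral_eq_lintegral_ofReal hint
            (ae_of_all _ fun t => (Real.exp_pos _).le)]
      _ = ∫⁻ t, ENNReal.ofReal (g s) *
            ENNReal.ofReal (Real.exp (-(L s * (t - s)) - (t - s)^2/2)) :=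
          (lintegral_const_mul' _ _ ENNReal.ofReal_ne_top).symm
      _ = ∫⁻ t, ENNReal.ofReal (g s * Real.exp (-(L s * (t - s)) - (t - s)^2/2)) := by
          simp_rw [ENNReal.ofReal_mul (hg0 s)]
      _ ≤ ∫⁻ t, ENNReal.ofReal (g t) :=
          lintegral_mono fun t => ENNReal.ofReal_le_ofReal (hb s t)
  have hcoe : ENNReal.ofReal (2*a/Real.sqrt (2*π)) ≠ 0 := by
    simp only [ne_eq, ENNReal.ofReal_eq_zero, not_le]
    positivity
  by_cases hI : (∫⁻ t, ENNReal.ofReal (g t)) = ⊤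
  · rw [hI, ENNReal.mul_top hcoe]
    exact le_top
  · have hpt : ∀ t, ENNReal.ofReal (g t) ≤
        (∫⁻ t, ENNReal.ofReal (g t)) / ENNReal.ofReal (Real.sqrt (2*π)) := by
      intro t
      rw [ENNReal.le_div_iff_mul_le (Or.inl (by simpa [ENNReal.ofReal_eq_zero] using sqpos))
        (Or.inl ENNReal.ofReal_ne_top)]
      exact key t
    have hset : {t : ℝ | |t| ≤ a} = Set.Icc (-a) a := by
      ext t; simp [abs_le]
    calc ∫⁻ t in {t : ℝ | |t| ≤ a}, ENNReal.ofReal (g t)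
        ≤ ∫⁻ _ in {t : ℝ | |t| ≤ a},
            (∫⁻ t, ENNReal.ofReal (g t)) / ENNReal.ofReal (Real.sqrt (2*π)) :=
          lintegral_mono fun t => hpt t
      _ = (∫⁻ t, ENNReal.ofReal (g t)) / ENNReal.ofReal (Real.sqrt (2*π)) *
            ENNReal.ofReal (2*a) := by
          rw [setLIntegral_const, hset, Real.volume_Icc]
          norm_num
          ring_nf
          rw [ENNReal.ofReal_mul ha.le, ENNReal.ofReal_ofNat]
          ring
      _ = ENNReal.ofReal (2*a/Real.sqrt (2*π)) * ∫⁻ t, ENNReal.ofReal (g t) := by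
          rw [ENNReal.ofReal_div_of_pos sqpos, div_eq_mul_inv, div_eq_mul_inv]
          ring


variable {d : ℕ}

/-- effective boundary coupling constant -/
noncomputable def cker (p : (Fin d → ℤ) → ℝ) (Λ : Finset (Fin d → ℤ))
    (z : Fin d → ℤ) : ℝ :=
  ∑' w, if w ∈ Λ then 0 else p (z - w) + p (w - z)

/-- finite-sum form of the Hamiltonian for configurations vanishing outside `Λ` -/
noncomputable def HF (p : (Fin d → ℤ) → ℝ) (V : ℝ → ℝ) (Λ : Finset (Fin d → ℤ))
    (ψ : (Fin d → ℤ) → ℝ) : ℝ :=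
  (1/2) * ((∑ q ∈ Λ ×ˢ Λ, p (q.1 - q.2) * V (ψ q.1 - ψ q.2)) +
    ∑ z ∈ Λ, cker p Λ z * V (ψ z))

lemma summable_of_tsum_one {p : (Fin d → ℤ) → ℝ} (hp_sum : ∑' x, p x = 1) :
    Summable p := by
  by_contra h
  rw [tsum_eq_zero_of_not_summable h] at hp_sum
  norm_num at hp_sum

lemma summable_subLeft {p : (Fin d → ℤ) → ℝ} (hps : Summable p) (z : Fin d → ℤ) :
    Summable fun w => p (z - w) :=
  ((Equiv.subLeft z).summable_iff (f := p)).mpr hps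

lemma summable_subRight {p : (Fin d → ℤ) → ℝ} (hps : Summable p) (z : Fin d → ℤ) :
    Summable fun w => p (w - z) :=
  ((Equiv.subRight z).summable_iff (f := p)).mpr hps

lemma cker_nonneg {p : (Fin d → ℤ) → ℝ} (hp0 : ∀ x, 0 ≤ p x)
    (Λ : Finset (Fin d → ℤ)) (z : Fin d → ℤ) : 0 ≤ cker p Λ z := by
  apply tsum_nonneg
  intro w
  by_cases hw : w ∈ Λ <;> simp [hw]
  exact add_nonneg (hp0 _) (hp0 _)

lemma cker_summand_summable {p : (Fin d → ℤ) → ℝ} (hp0 : ∀ x, 0 ≤ p x) (hps : Summable p)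
    (Λ : Finset (Fin d → ℤ)) (z : Fin d → ℤ) :
    Summable fun w => if w ∈ Λ then (0:ℝ) else p (z - w) + p (w - z) := by
  refine Summable.of_nonneg_of_le (fun w => ?_) (fun w => ?_)
    ((summable_subLeft hps z).add (summable_subRight hps z))
  · by_cases hw : w ∈ Λ <;> simp [hw]
    exact add_nonneg (hp0 _) (hp0 _)
  · by_cases hw : w ∈ Λ <;> simp [hw]
    exact add_nonneg (hp0 _) (hp0 _)

/-- key mass bound: pinned-neighbour weights plus boundary weight is at most 2 -/
lemma kappa_bound {p : (Fin d → ℤ) → ℝ} (hp0 : ∀ x, 0 ≤ p x)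
    (hp_sum : ∑' x, p x = 1) (Λ : Finset (Fin d → ℤ)) (x : Fin d → ℤ) :
    (∑ w ∈ Λ.erase x, (p (x - w) + p (w - x))) + cker p Λ x ≤ 2 := by
  have hps : Summable p := summable_of_tsum_one hp_sum
  have hf : Summable (fun w => p (x - w) + p (w - x)) :=
    (summable_subLeft hps x).add (summable_subRight hps x)
  have e1 : ∑' w, p (x - w) = 1 := by
    rw [← hp_sum]; exact (Equiv.subLeft x).tsum_eq p
  have e2 : ∑' w, p (w - x) = 1 := by
    rw [← hp_sum]; exact (Equiv.subRight x).tsum_eq p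
  have htot : ∑' w, (p (x - w) + p (w - x)) = 2 := by
    rw [Summable.tsum_add (summable_subLeft hps x) (summable_subRight hps x), e1, e2]; norm_num
  set f : (Fin d → ℤ) → ℝ := fun w => p (x - w) + p (w - x) with hfdef
  have hg1 : (∑ w ∈ Λ.erase x, f w) = ∑' w, (if w ∈ Λ.erase x then f w else 0) := by
    rw [tsum_eq_sum (s := Λ.erase x) (fun w hw => by simp [hw])]
    exact (Finset.sum_congr rfl fun w hw => by simp [hw]).symm
  have hs1 : Summable (fun w => if w ∈ Λ.erase x then f w else 0) :=
    summable_of_ne_finset_zero (s := Λ.erase x) (fun w hw => by simp [hw])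
  have hs2 : Summable (fun w => if w ∈ Λ then (0:ℝ) else f w) :=
    cker_summand_summable hp0 hps Λ x
  have hle : ∀ w, (if w ∈ Λ.erase x then f w else 0) + (if w ∈ Λ then (0:ℝ) else f w) ≤ f w := by
    intro w
    have hf0 : 0 ≤ f w := add_nonneg (hp0 _) (hp0 _)
    by_cases h1 : w ∈ Λ
    · by_cases h2 : w ∈ Λ.erase x <;> simp [h1, h2, hf0]
    · have : w ∉ Λ.erase x := fun hc => h1 (Finset.mem_of_mem_erase hc)
      simp [h1, this]
  calc (∑ w ∈ Λ.erase x, f w) + cker p Λ x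
      = ∑' w, ((if w ∈ Λ.erase x then f w else 0) + (if w ∈ Λ then (0:ℝ) else f w)) := by
        rw [hg1, cker, ← Summable.tsum_add hs1 hs2]
    _ ≤ ∑' w, f w := Summable.tsum_le_tsum hle (hs1.add hs2) hf
    _ = 2 := htot

lemma ham_eq_HF {p : (Fin d → ℤ) → ℝ} {V : ℝ → ℝ} {Λ : Finset (Fin d → ℤ)}
    (hp0 : ∀ x, 0 ≤ p x) (hps : Summable p) (hV_even : ∀ t, V (-t) = V t)
    (ψ : (Fin d → ℤ) → ℝ) (hψ0 : ∀ z ∉ Λ, ψ z = 0) :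
    hamiltonian p V Λ ψ = HF p V Λ ψ := by
  classical
  set M : ℝ := ∑ z ∈ Λ, |V (ψ z)| with hMdef
  have hM0 : 0 ≤ M := Finset.sum_nonneg fun _ _ => abs_nonneg _
  have hM : ∀ z ∈ Λ, |V (ψ z)| ≤ M := fun z hz =>
    Finset.single_le_sum (f := fun z => |V (ψ z)|) (fun i _ => abs_nonneg _) hz
  set F₁ : (Fin d → ℤ) × (Fin d → ℤ) → ℝ :=
    fun q => if q.1 ∈ Λ ∧ q.2 ∈ Λ then p (q.1 - q.2) * V (ψ q.1 - ψ q.2) else 0 with hF₁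
  set F₂ : (Fin d → ℤ) × (Fin d → ℤ) → ℝ :=
    fun q => if q.1 ∈ Λ ∧ q.2 ∉ Λ then p (q.1 - q.2) * V (ψ q.1) else 0 with hF₂
  set F₃ : (Fin d → ℤ) × (Fin d → ℤ) → ℝ :=
    fun q => if q.1 ∉ Λ ∧ q.2 ∈ Λ then p (q.1 - q.2) * V (ψ q.2) else 0 with hF₃
  -- pointwise splitting
  have hsplit : ∀ q : (Fin d → ℤ) × (Fin d → ℤ),
      (if q.1 ∈ Λ ∨ q.2 ∈ Λ then p (q.1 - q.2) * V (ψ q.1 - ψ q.2) else 0)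
        = F₁ q + F₂ q + F₃ q := by
    rintro ⟨z, w⟩
    by_cases hz : z ∈ Λ <;> by_cases hw : w ∈ Λ
    · simp [hF₁, hF₂, hF₃, hz, hw]
    · simp [hF₁, hF₂, hF₃, hz, hw, hψ0 w hw]
    · simp [hF₁, hF₂, hF₃, hz, hw, hψ0 z hz, zero_sub, hV_even]
    · simp [hF₁, hF₂, hF₃, hz, hw]
  -- summability
  have hs1 : Summable F₁ := by
    apply summable_of_ne_finset_zero (s := Λ ×ˢ Λ)
    intro q hq
    rw [Finset.mem_product] at hq
    simp only [hF₁]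
    rw [if_neg (by tauto)]
  have hbase : Summable (fun q : (Fin d → ℤ) × (Fin d → ℤ) =>
      (if q.1 ∈ Λ then M else 0) * p q.2) := by
    have h1 : Summable (fun z : Fin d → ℤ => if z ∈ Λ then M else 0) :=
      summable_of_ne_finset_zero (s := Λ) fun z hz => if_neg hz
    exact Summable.mul_of_nonneg (f := fun z : Fin d → ℤ => if z ∈ Λ then M else 0)
      (g := p) h1 hps (fun z => by by_cases h : z ∈ Λ <;> simp [h, hM0]) (fun z => hp0 z)
  have hG2 : Summable (fun q : (Fin d → ℤ) × (Fin d → ℤ) =>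
      (if q.1 ∈ Λ then M else 0) * p (q.1 - q.2)) := by
    have := ((Equiv.prodShear (Equiv.refl (Fin d → ℤ))
      (fun z => Equiv.subLeft z)).summable_iff
      (f := fun q : (Fin d → ℤ) × (Fin d → ℤ) => (if q.1 ∈ Λ then M else 0) * p q.2)).mpr hbase
    convert this using 1
    rfl
  have hG3 : Summable (fun q : (Fin d → ℤ) × (Fin d → ℤ) =>
      (if q.2 ∈ Λ then M else 0) * p (q.1 - q.2)) := by
    have := (((Equiv.prodComm (Fin d → ℤ) (Fin d → ℤ)).trans
      (Equiv.prodShear (Equiv.refl (Fin d → ℤ)) (fun z => Equiv.subRight z))).summable_iff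
      (f := fun q : (Fin d → ℤ) × (Fin d → ℤ) => (if q.1 ∈ Λ then M else 0) * p q.2)).mpr hbase
    convert this using 1
    rfl
  have habs2 : ∀ q : (Fin d → ℤ) × (Fin d → ℤ),
      ‖F₂ q‖ ≤ (if q.1 ∈ Λ then M else 0) * p (q.1 - q.2) := by
    rintro ⟨z, w⟩
    by_cases h : z ∈ Λ ∧ w ∉ Λ
    · simp only [hF₂, if_pos h, Real.norm_eq_abs, abs_mul, abs_of_nonneg (hp0 _), if_pos h.1]
      rw [mul_comm M (p (z - w))]
      exact mul_le_mul_of_nonneg_left (hM z h.1) (hp0 _)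
    · simp only [hF₂, if_neg h, Real.norm_eq_abs, abs_zero]
      by_cases hz : z ∈ Λ <;> simp [hz, hp0, mul_nonneg hM0 (hp0 _)]
  have habs3 : ∀ q : (Fin d → ℤ) × (Fin d → ℤ),
      ‖F₃ q‖ ≤ (if q.2 ∈ Λ then M else 0) * p (q.1 - q.2) := by
    rintro ⟨z, w⟩
    by_cases h : z ∉ Λ ∧ w ∈ Λ
    · simp only [hF₃, if_pos h, Real.norm_eq_abs, abs_mul, abs_of_nonneg (hp0 _), if_pos h.2]
      rw [mul_comm M (p (z - w))]
      exact mul_le_mul_of_nonneg_left (hM w h.2) (hp0 _)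
    · simp only [hF₃, if_neg h, Real.norm_eq_abs, abs_zero]
      by_cases hw : w ∈ Λ <;> simp [hw, hp0, mul_nonneg hM0 (hp0 _)]
  have hs2 : Summable F₂ := Summable.of_norm_bounded hG2 habs2
  have hs3 : Summable F₃ := Summable.of_norm_bounded hG3 habs3
  -- tsum of F₁
  have T1 : ∑' q, F₁ q = ∑ q ∈ Λ ×ˢ Λ, p (q.1 - q.2) * V (ψ q.1 - ψ q.2) := by
    rw [tsum_eq_sum (s := Λ ×ˢ Λ)]
    · apply Finset.sum_congr rfl
      intro q hq
      rw [Finset.mem_product] at hq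
      simp [hF₁, hq.1, hq.2]
    · intro q hq
      rw [Finset.mem_product] at hq
      simp only [hF₁]
      rw [if_neg (by tauto)]
  -- tsum of F₂
  have hinner2 : ∀ z, Summable fun w => F₂ (z, w) := by
    intro z
    apply Summable.of_norm_bounded (g := fun w => (if z ∈ Λ then M else 0) * p (z - w))
      (((summable_subLeft hps z).mul_left _))
    intro w
    exact habs2 (z, w)
  have T2 : ∑' q, F₂ q = ∑ z ∈ Λ, V (ψ z) * ∑' w, (if w ∈ Λ then 0 else p (z - w)) := by
    rw [Summable.tsum_prod' hs2 hinner2]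
    rw [tsum_eq_sum (s := Λ)]
    · apply Finset.sum_congr rfl
      intro z hz
      have : ∀ w, F₂ (z, w) = V (ψ z) * (if w ∈ Λ then 0 else p (z - w)) := by
        intro w
        by_cases hw : w ∈ Λ <;> simp [hF₂, hz, hw, mul_comm]
      rw [tsum_congr this, tsum_mul_left]
    · intro z hz
      have : ∀ w, F₂ (z, w) = 0 := by intro w; simp [hF₂, hz]
      simp [tsum_congr this]
  -- tsum of F₃ via swap
  set F₃' : (Fin d → ℤ) × (Fin d → ℤ) → ℝ :=
    fun q => F₃ ((Equiv.prodComm _ _) q) with hF₃'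
  have hs3' : Summable F₃' :=
    ((Equiv.prodComm (Fin d → ℤ) (Fin d → ℤ)).summable_iff (f := F₃)).mpr hs3
  have hswap : ∑' q, F₃ q = ∑' q, F₃' q :=
    ((Equiv.prodComm (Fin d → ℤ) (Fin d → ℤ)).tsum_eq F₃).symm
  have hinner3 : ∀ z, Summable fun w => F₃' (z, w) := by
    intro z
    apply Summable.of_norm_bounded (g := fun w => (if z ∈ Λ then M else 0) * p (w - z))
      (((summable_subRight hps z).mul_left _))
    intro w
    simpa [hF₃', Equiv.prodComm] using habs3 (w, z)
  have T3 : ∑' q, F₃ q = ∑ z ∈ Λ, V (ψ z) * ∑' w, (if w ∈ Λ then 0 else p (w - z)) := by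
    rw [hswap, Summable.tsum_prod' hs3' hinner3]
    rw [tsum_eq_sum (s := Λ)]
    · apply Finset.sum_congr rfl
      intro z hz
      have : ∀ w, F₃' (z, w) = V (ψ z) * (if w ∈ Λ then 0 else p (w - z)) := by
        intro w
        by_cases hw : w ∈ Λ <;> simp [hF₃', hF₃, Equiv.prodComm, hz, hw, mul_comm]
      rw [tsum_congr this, tsum_mul_left]
    · intro z hz
      have : ∀ w, F₃' (z, w) = 0 := by
        intro w; simp [hF₃', hF₃, Equiv.prodComm, hz]
      simp [tsum_congr this]
  -- combine boundary sums into cker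
  have hc2 : ∀ z, Summable fun w => if w ∈ Λ then (0:ℝ) else p (z - w) := by
    intro z
    refine Summable.of_nonneg_of_le (fun w => ?_) (fun w => ?_) (summable_subLeft hps z)
    · by_cases hw : w ∈ Λ <;> simp [hw, hp0]
    · by_cases hw : w ∈ Λ <;> simp [hw, hp0]
  have hc3 : ∀ z, Summable fun w => if w ∈ Λ then (0:ℝ) else p (w - z) := by
    intro z
    refine Summable.of_nonneg_of_le (fun w => ?_) (fun w => ?_) (summable_subRight hps z)
    · by_cases hw : w ∈ Λ <;> simp [hw, hp0]
    · by_cases hw : w ∈ Λ <;> simp [hw, hp0]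
  have hcker : ∀ z, cker p Λ z
      = (∑' w, (if w ∈ Λ then 0 else p (z - w))) + ∑' w, (if w ∈ Λ then 0 else p (w - z)) := by
    intro z
    rw [cker, ← Summable.tsum_add (hc2 z) (hc3 z)]
    apply tsum_congr
    intro w
    by_cases hw : w ∈ Λ <;> simp [hw]
  -- put everything together
  have hT : ∑' q : (Fin d → ℤ) × (Fin d → ℤ),
      (if q.1 ∈ Λ ∨ q.2 ∈ Λ then p (q.1 - q.2) * V (ψ q.1 - ψ q.2) else 0)
      = (∑' q, F₁ q) + (∑' q, F₂ q) + ∑' q, F₃ q := by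
    rw [tsum_congr hsplit, Summable.tsum_add (hs1.add hs2) hs3, Summable.tsum_add hs1 hs2]
  have hAB : (∑ z ∈ Λ, V (ψ z) * ∑' w, (if w ∈ Λ then (0:ℝ) else p (z - w)))
      + ∑ z ∈ Λ, V (ψ z) * ∑' w, (if w ∈ Λ then (0:ℝ) else p (w - z))
      = ∑ z ∈ Λ, cker p Λ z * V (ψ z) := by
    rw [← Finset.sum_add_distrib]
    apply Finset.sum_congr rfl
    intro z hz
    rw [hcker z]
    ring
  rw [hamiltonian, hT, T1, T2, T3, HF, add_assoc, hAB]

lemma quad_main {p : (Fin d → ℤ) → ℝ} {V : ℝ → ℝ} {Λ : Finset (Fin d → ℤ)}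
    {x : Fin d → ℤ} (hx : x ∈ Λ) (hp0 : ∀ y, 0 ≤ p y)
    (hquad : ∀ s t : ℝ, V t ≤ V s + deriv V s * (t - s) + (t - s)^2/2)
    (hkb : (∑ w ∈ Λ.erase x, (p (x - w) + p (w - x))) + cker p Λ x ≤ 2)
    (hcnn : ∀ z, 0 ≤ cker p Λ z)
    (ψ : (Fin d → ℤ) → ℝ) :
    ∃ L : ℝ → ℝ, ∀ s t : ℝ,
      HF p V Λ (Function.update ψ x t) ≤ HF p V Λ (Function.update ψ x s)
        + L s * (t - s) + (t - s)^2/2 := by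
  classical
  set lq : ((Fin d → ℤ) × (Fin d → ℤ)) → ℝ → ℝ := fun q s =>
    if q.1 = x ∧ q.2 = x then 0
    else if q.1 = x then p (q.1 - q.2) * deriv V (s - ψ q.2)
    else if q.2 = x then -(p (q.1 - q.2) * deriv V (ψ q.1 - s)) else 0 with hlq
  set κ : ((Fin d → ℤ) × (Fin d → ℤ)) → ℝ := fun q =>
    if q.1 = x ∧ q.2 = x then 0
    else if q.1 = x then p (q.1 - q.2)
    else if q.2 = x then p (q.1 - q.2) else 0 with hκ
  refine ⟨fun s => (1/2) * ((∑ q ∈ Λ ×ˢ Λ, lq q s) + cker p Λ x * deriv V s), ?_⟩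
  intro s t
  have pair : ∀ q : (Fin d → ℤ) × (Fin d → ℤ),
      p (q.1 - q.2) * V (Function.update ψ x t q.1 - Function.update ψ x t q.2)
        ≤ p (q.1 - q.2) * V (Function.update ψ x s q.1 - Function.update ψ x s q.2)
          + lq q s * (t - s) + κ q * ((t - s)^2/2) := by
    rintro ⟨z, w⟩
    by_cases hz : z = x <;> by_cases hw : w = x
    · rw [hz, hw]
      have h1 : lq (x, x) s = 0 := by simp [hlq]
      have h2 : κ (x, x) = 0 := by simp [hκ]
      rw [h1, h2]
      simp
    · rw [hz]
      have h1 : lq (x, w) s = p (x - w) * deriv V (s - ψ w) := by simp [hlq, hw]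
      have h2 : κ (x, w) = p (x - w) := by simp [hκ, hw]
      rw [h1, h2]
      simp only [Function.update_self, Function.update_of_ne hw]
      have hq := hquad (s - ψ w) (t - ψ w)
      have harg : t - ψ w - (s - ψ w) = t - s := by ring
      rw [harg] at hq
      calc p (x - w) * V (t - ψ w)
          ≤ p (x - w) * (V (s - ψ w) + deriv V (s - ψ w) * (t - s) + (t - s)^2/2) :=
            mul_le_mul_of_nonneg_left hq (hp0 _)
        _ = p (x - w) * V (s - ψ w) + p (x - w) * deriv V (s - ψ w) * (t - s)
            + p (x - w) * ((t - s)^2/2) := by ring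
    · rw [hw]
      have h1 : lq (z, x) s = -(p (z - x) * deriv V (ψ z - s)) := by simp [hlq, hz]
      have h2 : κ (z, x) = p (z - x) := by simp [hκ, hz]
      rw [h1, h2]
      simp only [Function.update_self, Function.update_of_ne hz]
      have hq := hquad (ψ z - s) (ψ z - t)
      calc p (z - x) * V (ψ z - t)
          ≤ p (z - x) * (V (ψ z - s) + deriv V (ψ z - s) * (ψ z - t - (ψ z - s))
              + (ψ z - t - (ψ z - s))^2/2) := mul_le_mul_of_nonneg_left hq (hp0 _)
        _ = p (z - x) * V (ψ z - s) + -(p (z - x) * deriv V (ψ z - s)) * (t - s)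
            + p (z - x) * ((t - s)^2/2) := by ring
    · have h1 : lq (z, w) s = 0 := by simp [hlq, hz, hw]
      have h2 : κ (z, w) = 0 := by simp [hκ, hz, hw]
      rw [h1, h2]
      simp [Function.update_of_ne hz, Function.update_of_ne hw]
  have hsum1 : ∑ q ∈ Λ ×ˢ Λ,
        p (q.1 - q.2) * V (Function.update ψ x t q.1 - Function.update ψ x t q.2)
      ≤ (∑ q ∈ Λ ×ˢ Λ,
          p (q.1 - q.2) * V (Function.update ψ x s q.1 - Function.update ψ x s q.2))
        + (∑ q ∈ Λ ×ˢ Λ, lq q s) * (t - s)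
        + (∑ q ∈ Λ ×ˢ Λ, κ q) * ((t - s)^2/2) := by
    have h := Finset.sum_le_sum (f := fun q : (Fin d → ℤ) × (Fin d → ℤ) =>
      p (q.1 - q.2) * V (Function.update ψ x t q.1 - Function.update ψ x t q.2))
      (s := Λ ×ˢ Λ) (fun q _ => pair q)
    calc ∑ q ∈ Λ ×ˢ Λ,
        p (q.1 - q.2) * V (Function.update ψ x t q.1 - Function.update ψ x t q.2)
        ≤ ∑ q ∈ Λ ×ˢ Λ,
          (p (q.1 - q.2) * V (Function.update ψ x s q.1 - Function.update ψ x s q.2)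
            + lq q s * (t - s) + κ q * ((t - s)^2/2)) := h
      _ = _ := by
          rw [Finset.sum_add_distrib, Finset.sum_add_distrib, ← Finset.sum_mul,
            ← Finset.sum_mul]
  have hS2 : ∑ z ∈ Λ, cker p Λ z * V (Function.update ψ x t z)
      ≤ (∑ z ∈ Λ, cker p Λ z * V (Function.update ψ x s z))
        + (cker p Λ x * deriv V s) * (t - s) + cker p Λ x * ((t - s)^2/2) := by
    have hterm : ∀ z ∈ Λ, cker p Λ z * V (Function.update ψ x t z)
        ≤ cker p Λ z * V (Function.update ψ x s z)
          + (if z = x then cker p Λ x * deriv V s else 0) * (t - s)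
          + (if z = x then cker p Λ x else 0) * ((t - s)^2/2) := by
      intro z hz
      by_cases hzx : z = x
      · subst hzx
        simp only [Function.update_self, if_pos rfl]
        calc cker p Λ z * V t
            ≤ cker p Λ z * (V s + deriv V s * (t - s) + (t - s)^2/2) :=
              mul_le_mul_of_nonneg_left (hquad s t) (hcnn z)
          _ = cker p Λ z * V s + cker p Λ z * deriv V s * (t - s)
              + cker p Λ z * ((t - s)^2/2) := by ring
      · simp [Function.update_of_ne hzx, hzx]
    have h := Finset.sum_le_sum hterm
    rw [Finset.sum_add_distrib, Finset.sum_add_distrib, ← Finset.sum_mul, ← Finset.sum_mul,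
      Finset.sum_ite_eq' Λ x (fun _ => cker p Λ x * deriv V s),
      Finset.sum_ite_eq' Λ x (fun _ => cker p Λ x), if_pos hx, if_pos hx] at h
    exact h
  have hκsum : ∑ q ∈ Λ ×ˢ Λ, κ q = ∑ w ∈ Λ.erase x, (p (x - w) + p (w - x)) := by
    rw [Finset.sum_product, ← Finset.add_sum_erase Λ _ hx]
    have hgx : ∑ w ∈ Λ, κ (x, w) = ∑ w ∈ Λ.erase x, p (x - w) := by
      rw [← Finset.sum_erase Λ (a := x) (f := fun w => κ (x, w)) (by simp [hκ])]
      apply Finset.sum_congr rfl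
      intro w hw
      have hwx := (Finset.mem_erase.mp hw).1
      simp [hκ, hwx]
    have hgz : ∀ z ∈ Λ.erase x, ∑ w ∈ Λ, κ (z, w) = p (z - x) := by
      intro z hz
      have hzx := (Finset.mem_erase.mp hz).1
      have hform : ∀ w, κ (z, w) = if w = x then p (z - w) else 0 := by
        intro w
        by_cases hwx : w = x <;> simp [hκ, hzx, hwx]
      rw [Finset.sum_congr rfl (fun w _ => hform w),
        Finset.sum_ite_eq' Λ x (fun w => p (z - w)), if_pos hx]
    rw [hgx, Finset.sum_congr rfl hgz, Finset.sum_add_distrib]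
  have hQ : (0:ℝ) ≤ (t - s)^2/2 := by positivity
  have hcoef : (∑ q ∈ Λ ×ˢ Λ, κ q + cker p Λ x) * ((t - s)^2/2) ≤ 2 * ((t - s)^2/2) := by
    apply mul_le_mul_of_nonneg_right _ hQ
    rw [hκsum]
    exact hkb
  calc HF p V Λ (Function.update ψ x t)
      = (1/2) * ((∑ q ∈ Λ ×ˢ Λ,
          p (q.1 - q.2) * V (Function.update ψ x t q.1 - Function.update ψ x t q.2))
        + ∑ z ∈ Λ, cker p Λ z * V (Function.update ψ x t z)) := rfl
    _ ≤ (1/2) * (((∑ q ∈ Λ ×ˢ Λ,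
          p (q.1 - q.2) * V (Function.update ψ x s q.1 - Function.update ψ x s q.2))
        + (∑ q ∈ Λ ×ˢ Λ, lq q s) * (t - s) + (∑ q ∈ Λ ×ˢ Λ, κ q) * ((t - s)^2/2))
        + ((∑ z ∈ Λ, cker p Λ z * V (Function.update ψ x s z))
          + (cker p Λ x * deriv V s) * (t - s) + cker p Λ x * ((t - s)^2/2))) := by
        linarith [hsum1, hS2]
    _ = (1/2) * ((∑ q ∈ Λ ×ˢ Λ,
          p (q.1 - q.2) * V (Function.update ψ x s q.1 - Function.update ψ x s q.2))
        + ∑ z ∈ Λ, cker p Λ z * V (Function.update ψ x s z))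
        + ((1/2) * ((∑ q ∈ Λ ×ˢ Λ, lq q s) + cker p Λ x * deriv V s)) * (t - s)
        + (1/2) * ((∑ q ∈ Λ ×ˢ Λ, κ q + cker p Λ x) * ((t - s)^2/2)) := by ring
    _ ≤ (1/2) * ((∑ q ∈ Λ ×ˢ Λ,
          p (q.1 - q.2) * V (Function.update ψ x s q.1 - Function.update ψ x s q.2))
        + ∑ z ∈ Λ, cker p Λ z * V (Function.update ψ x s z))
        + ((1/2) * ((∑ q ∈ Λ ×ˢ Λ, lq q s) + cker p Λ x * deriv V s)) * (t - s)
        + (t - s)^2/2 := by linarith [hcoef]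
    _ = _ := rfl

/-- For an even `C²` interaction `V` with `0 ≤ V'' ≤ 1` and a symmetric
probability kernel `p`, the conditional probability of pinning one more site satisfies
`Z_Λ(A ∪ {x}) / Z_Λ(A) ≤ 2a / √(2π)`. -/
theorem pinned_partition_ratio_le {d : ℕ} (p : (Fin d → ℤ) → ℝ) (V : ℝ → ℝ)
    (hp_nonneg : ∀ x, 0 ≤ p x) (hp_symm : ∀ x, p (-x) = p x)
    (hp_sum : ∑' x, p x = 1)
    (hV_even : ∀ t, V (-t) = V t) (hV_smooth : ContDiff ℝ 2 V)
    (hV''_nonneg : ∀ t, 0 ≤ iteratedDeriv 2 V t)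
    (hV''_le_one : ∀ t, iteratedDeriv 2 V t ≤ 1)
    (Λ : Finset (Fin d → ℤ)) (a : ℝ) (ha : 0 < a)
    (x : Fin d → ℤ) (hx : x ∈ Λ) (A : Finset (Fin d → ℤ))
    (hA : A ⊆ Λ.erase x) :
    constrainedZ p V Λ a (insert x A) / constrainedZ p V Λ a A
      ≤ 2 * a / Real.sqrt (2 * Real.pi) := by

  classical
  -- basic facts
  have hps : Summable p := summable_of_tsum_one hp_sum
  have hquad : ∀ s t : ℝ, V t ≤ V s + deriv V s * (t - s) + (t - s)^2/2 :=
    quad_upper hV_smooth hV''_le_one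
  have hkb := kappa_bound hp_nonneg hp_sum Λ x
  have hcnn := cker_nonneg (p := p) hp_nonneg Λ
  set F : ({z // z ∈ Λ} → ℝ) → ℝ :=
    fun φ => Real.exp (-(HF p V Λ (extendBy Λ φ))) with hFdef
  have hFeq : ∀ φ : {z // z ∈ Λ} → ℝ,
      Real.exp (-(hamiltonian p V Λ (extendBy Λ φ))) = F φ := by
    intro φ
    rw [hFdef, ham_eq_HF hp_nonneg hps hV_even (extendBy Λ φ)
      (fun z hz => by simp [extendBy, hz])]
  set SA : Set ({z // z ∈ Λ} → ℝ) := {φ | ∀ z ∈ A, |extendBy Λ φ z| ≤ a} with hSAdef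
  set SI : Set ({z // z ∈ Λ} → ℝ) :=
    {φ | ∀ z ∈ insert x A, |extendBy Λ φ z| ≤ a} with hSIdef
  have hZA : constrainedZ p V Λ a A = ∫ φ in SA, F φ :=
    integral_congr_ae (Filter.Eventually.of_forall fun φ => hFeq φ)
  have hZI : constrainedZ p V Λ a (insert x A) = ∫ φ in SI, F φ :=
    integral_congr_ae (Filter.Eventually.of_forall fun φ => hFeq φ)
  -- continuity / measurability
  have hext : ∀ z : Fin d → ℤ, Continuous (fun φ : {z // z ∈ Λ} → ℝ => extendBy Λ φ z) := by
    intro z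
    by_cases h : z ∈ Λ
    · simp only [extendBy, dif_pos h]
      exact continuous_apply _
    · simp only [extendBy, dif_neg h]
      exact continuous_const
  have hVc : Continuous V := hV_smooth.continuous
  have hFcont : Continuous F := by
    apply Real.continuous_exp.comp
    apply Continuous.neg
    unfold HF
    apply continuous_const.mul
    apply Continuous.add
    · apply continuous_finset_sum
      intro q _
      exact continuous_const.mul (hVc.comp ((hext q.1).sub (hext q.2)))
    · apply continuous_finset_sum
      intro z _
      exact continuous_const.mul (hVc.comp (hext z))
  have hFmeas : Measurable F := hFcont.measurable
  have habs_meas : MeasurableSet {u : ℝ | |u| ≤ a} :=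
    measurableSet_le continuous_abs.measurable measurable_const
  have hSmeas : ∀ B : Finset (Fin d → ℤ),
      MeasurableSet {φ : {z // z ∈ Λ} → ℝ | ∀ z ∈ B, |extendBy Λ φ z| ≤ a} := by
    intro B
    have : {φ : {z // z ∈ Λ} → ℝ | ∀ z ∈ B, |extendBy Λ φ z| ≤ a}
        = ⋂ z ∈ (B : Set (Fin d → ℤ)), (fun φ => extendBy Λ φ z) ⁻¹' {u | |u| ≤ a} := by
      ext φ
      simp [Set.mem_iInter]
    rw [this]
    exact MeasurableSet.biInter (B : Set (Fin d → ℤ)).to_countable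
      (fun z _ => (hext z).measurable habs_meas)
  have hSA_meas : MeasurableSet SA := hSmeas A
  have hSI_meas : MeasurableSet SI := hSmeas (insert x A)
  -- positivity and the trivial case
  have hZA_nonneg : 0 ≤ constrainedZ p V Λ a A := by
    rw [hZA]
    exact integral_nonneg fun φ => (Real.exp_pos _).le
  rcases eq_or_lt_of_le hZA_nonneg with h0 | hpos
  · rw [← h0, div_zero]
    positivity
  -- integrability of F on SA
  have hIntA : IntegrableOn F SA := by
    by_contra hni
    rw [hZA, integral_undef hni] at hpos
    exact lt_irrefl _ hpos
  -- lintegral quantities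
  set fA : ({z // z ∈ Λ} → ℝ) → ENNReal :=
    SA.indicator (fun φ => ENNReal.ofReal (F φ)) with hfAdef
  set fI : ({z // z ∈ Λ} → ℝ) → ENNReal :=
    SI.indicator (fun φ => ENNReal.ofReal (F φ)) with hfIdef
  have hfA_meas : Measurable fA := (hFmeas.ennreal_ofReal).indicator hSA_meas
  have hfI_meas : Measurable fI := (hFmeas.ennreal_ofReal).indicator hSI_meas
  set c : ENNReal := ENNReal.ofReal (2*a/Real.sqrt (2*Real.pi)) with hcdef
  -- the split coordinate
  set x0 : {z // z ∈ Λ} := ⟨x, hx⟩ with hx0def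
  set Φ : ({i : {z // z ∈ Λ} // ¬ i = x0} → ℝ) → ℝ → ({z // z ∈ Λ} → ℝ) :=
    fun η r => fun i => if h : i = x0 then r else η ⟨i, h⟩ with hΦdef
  haveI hU : Unique {i : {z // z ∈ Λ} // i = x0} :=
    ⟨⟨⟨x0, rfl⟩⟩, fun a => Subtype.ext a.2⟩
  letI hFin : Fintype {i : {z // z ∈ Λ} // i = x0} := Subtype.fintype _
  set e1 : ({z // z ∈ Λ} → ℝ) ≃ᵐ
      ({i : {z // z ∈ Λ} // i = x0} → ℝ) × ({i : {z // z ∈ Λ} // ¬ i = x0} → ℝ) :=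
    MeasurableEquiv.piEquivPiSubtypeProd (fun _ : {z // z ∈ Λ} => ℝ) (fun i => i = x0)
    with he1def
  have MP1 : MeasurePreserving e1 volume volume := by
    rw [he1def]
    exact MeasureTheory.volume_preserving_piEquivPiSubtypeProd
      (fun _ : {z // z ∈ Λ} => ℝ) (fun i => i = x0)
  set e2 : ({i : {z // z ∈ Λ} // i = x0} → ℝ) ≃ᵐ ℝ :=
    MeasurableEquiv.piUnique (fun _ : {i : {z // z ∈ Λ} // i = x0} => ℝ) with he2def
  have MP2 : MeasurePreserving e2 volume volume :=
    MeasureTheory.volume_preserving_piUnique _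
  have hEsymm : ∀ (η : {i : {z // z ∈ Λ} // ¬ i = x0} → ℝ) (r : ℝ),
      e1.symm (e2.symm r, η) = Φ η r := by
    intro η r
    funext i
    by_cases h : i = x0
    · simp [he1def, he2def, hΦdef, MeasurableEquiv.piEquivPiSubtypeProd,
        MeasurableEquiv.piUnique, Equiv.piEquivPiSubtypeProd, Equiv.piUnique, h,
        uniqueElim_const]
    · simp [he1def, he2def, hΦdef, MeasurableEquiv.piEquivPiSubtypeProd,
        MeasurableEquiv.piUnique, Equiv.piEquivPiSubtypeProd, Equiv.piUnique, h]
  have step1 : ∀ (f : ({z // z ∈ Λ} → ℝ) → ENNReal), Measurable f →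
      ∫⁻ φ, f φ = ∫⁻ η, ∫⁻ r : ℝ, f (Φ η r) := by
    intro f hf
    calc ∫⁻ φ, f φ
        = ∫⁻ pq, f (e1.symm pq) := ((MP1.symm e1).lintegral_comp hf).symm
      _ = ∫⁻ pq, f (e1.symm pq) ∂((volume : Measure ({i : {z // z ∈ Λ} // i = x0} → ℝ)).prod
            (volume : Measure ({i : {z // z ∈ Λ} // ¬ i = x0} → ℝ))) := by
          rw [← MeasureTheory.Measure.volume_eq_prod]
      _ = ∫⁻ η, ∫⁻ ξ, f (e1.symm (ξ, η)) ∂volume ∂volume :=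
          lintegral_prod_symm' _ (hf.comp e1.symm.measurable)
      _ = ∫⁻ η, ∫⁻ r : ℝ, f (Φ η r) := by
          apply lintegral_congr
          intro η
          have key := MP2.lintegral_comp
            (f := fun r : ℝ => f (e1.symm (e2.symm r, η)))
            ((hf.comp e1.symm.measurable).comp (e2.symm.measurable.prodMk measurable_const))
          calc ∫⁻ ξ, f (e1.symm (ξ, η))
              = ∫⁻ ξ, f (e1.symm (e2.symm (e2 ξ), η)) := by
                apply lintegral_congr
                intro ξ
                rw [e2.symm_apply_apply]
            _ = ∫⁻ r : ℝ, f (e1.symm (e2.symm r, η)) := key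
            _ = ∫⁻ r : ℝ, f (Φ η r) := lintegral_congr (fun r => by rw [hEsymm η r])
  -- configuration update identity
  have hext_upd : ∀ (η : {i : {z // z ∈ Λ} // ¬ i = x0} → ℝ) (r : ℝ),
      extendBy Λ (Φ η r) = Function.update (extendBy Λ (Φ η 0)) x r := by
    intro η r
    funext z
    rw [Function.update_apply]
    by_cases hzx : z = x
    · subst hzx
      simp [extendBy, hx, hΦdef, hx0def]
    · by_cases hzΛ : z ∈ Λ
      · have hne : ¬(⟨z, hzΛ⟩ : {z // z ∈ Λ}) = x0 := by
          simp [hx0def, Subtype.ext_iff, hzx]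
        simp [extendBy, hzΛ, hΦdef, hne, hzx]
      · simp [extendBy, hzΛ, hzx]
  -- membership characterizations
  have hmemA : ∀ η r, Φ η r ∈ SA ↔ ∀ z ∈ A, |extendBy Λ (Φ η 0) z| ≤ a := by
    intro η r
    rw [hSAdef]
    simp only [Set.mem_setOf_eq]
    constructor
    · intro h z hz
      have hzx : z ≠ x := (Finset.mem_erase.mp (hA hz)).1
      have := h z hz
      rwa [hext_upd η r, Function.update_of_ne hzx] at this
    · intro h z hz
      have hzx : z ≠ x := (Finset.mem_erase.mp (hA hz)).1
      rw [hext_upd η r, Function.update_of_ne hzx]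
      exact h z hz
  have hmemI : ∀ η r, Φ η r ∈ SI ↔
      ((∀ z ∈ A, |extendBy Λ (Φ η 0) z| ≤ a) ∧ |r| ≤ a) := by
    intro η r
    rw [hSIdef]
    simp only [Set.mem_setOf_eq]
    constructor
    · intro h
      constructor
      · intro z hz
        have hzx : z ≠ x := (Finset.mem_erase.mp (hA hz)).1
        have := h z (Finset.mem_insert_of_mem hz)
        rwa [hext_upd η r, Function.update_of_ne hzx] at this
      · have := h x (Finset.mem_insert_self x A)
        rwa [hext_upd η r, Function.update_self] at this
    · rintro ⟨h1, h2⟩ z hz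
      rcases Finset.mem_insert.mp hz with rfl | hz'
      · rwa [hext_upd η r, Function.update_self]
      · have hzx : z ≠ x := (Finset.mem_erase.mp (hA hz')).1
        rw [hext_upd η r, Function.update_of_ne hzx]
        exact h1 z hz'
  -- per-slice estimate
  have hperη : ∀ η, (∫⁻ r : ℝ, fI (Φ η r)) ≤ c * ∫⁻ r : ℝ, fA (Φ η r) := by
    intro η
    by_cases hgood : ∀ z ∈ A, |extendBy Λ (Φ η 0) z| ≤ a
    · have hgA : ∀ r : ℝ, fA (Φ η r) = ENNReal.ofReal (F (Φ η r)) := by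
        intro r
        rw [hfAdef, Set.indicator_of_mem ((hmemA η r).mpr hgood)]
      have hgI : ∀ r : ℝ, fI (Φ η r)
          = Set.indicator {r : ℝ | |r| ≤ a} (fun r => ENNReal.ofReal (F (Φ η r))) r := by
        intro r
        by_cases hr : |r| ≤ a
        · rw [hfIdef, Set.indicator_of_mem ((hmemI η r).mpr ⟨hgood, hr⟩),
            Set.indicator_of_mem (show r ∈ {u : ℝ | |u| ≤ a} from hr)]
        · rw [hfIdef, Set.indicator_of_notMem
            (fun hc => hr ((hmemI η r).mp hc).2),
            Set.indicator_of_notMem (show r ∉ {u : ℝ | |u| ≤ a} from hr)]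
      rw [lintegral_congr hgI, lintegral_congr hgA, lintegral_indicator habs_meas]
      obtain ⟨L, hL⟩ := quad_main hx hp_nonneg hquad hkb hcnn (extendBy Λ (Φ η 0))
      apply slice_bound (g := fun r => F (Φ η r))
        (fun r => (Real.exp_pos _).le) L ?_ ha
      intro s r
      have h1 := hL s r
      rw [hFdef]
      simp only
      rw [hext_upd η s, hext_upd η r, ← Real.exp_add]
      apply Real.exp_le_exp.mpr
      linarith
    · have hzero : ∀ r : ℝ, fI (Φ η r) = 0 := by
        intro r
        rw [hfIdef, Set.indicator_of_notMem (fun hc => hgood ((hmemI η r).mp hc).1)]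
      rw [lintegral_congr hzero]
      simp
  -- main lintegral inequality
  have hmain : (∫⁻ φ, fI φ) ≤ c * ∫⁻ φ, fA φ := by
    rw [step1 fI hfI_meas, step1 fA hfA_meas, ← lintegral_const_mul' c _ ENNReal.ofReal_ne_top]
    exact lintegral_mono fun η => hperη η
  -- back to Bochner integrals
  have hLA : ∫⁻ φ, fA φ = ∫⁻ φ in SA, ENNReal.ofReal (F φ) := by
    rw [hfAdef]
    exact lintegral_indicator hSA_meas _
  have hLI : ∫⁻ φ, fI φ = ∫⁻ φ in SI, ENNReal.ofReal (F φ) := by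
    rw [hfIdef]
    exact lintegral_indicator hSI_meas _
  have hLA_fin : (∫⁻ φ, fA φ) ≠ ⊤ := by
    rw [hLA]
    exact hIntA.lintegral_lt_top.ne
  have hbintA : ∫ φ in SA, F φ = (∫⁻ φ, fA φ).toReal := by
    rw [hLA]
    exact integral_eq_lintegral_of_nonneg_ae
      (Filter.Eventually.of_forall fun φ => (Real.exp_pos _).le)
      hFcont.aestronglyMeasurable.restrict
  have hbintI : ∫ φ in SI, F φ = (∫⁻ φ, fI φ).toReal := by
    rw [hLI]
    exact integral_eq_lintegral_of_nonneg_ae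
      (Filter.Eventually.of_forall fun φ => (Real.exp_pos _).le)
      hFcont.aestronglyMeasurable.restrict
  have hZApos : 0 < ∫ φ in SA, F φ := by rwa [hZA] at hpos
  rw [hZA, hZI, div_le_iff₀ hZApos]
  have hcoeff_nonneg : (0:ℝ) ≤ 2*a/Real.sqrt (2*Real.pi) := by positivity
  calc ∫ φ in SI, F φ = (∫⁻ φ, fI φ).toReal := hbintI
    _ ≤ (c * ∫⁻ φ, fA φ).toReal :=
        ENNReal.toReal_mono (ENNReal.mul_ne_top ENNReal.ofReal_ne_top hLA_fin) hmain
    _ = (2*a/Real.sqrt (2*Real.pi)) * (∫⁻ φ, fA φ).toReal := by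
        rw [ENNReal.toReal_mul, hcdef, ENNReal.toReal_ofReal hcoeff_nonneg]
    _ = (2*a/Real.sqrt (2*Real.pi)) * ∫ φ in SA, F φ := by rw [hbintA]
    _ = 2*a/Real.sqrt (2*Real.pi) * ∫ φ in SA, F φ := by ring
end

section
/- In the one-dimensional δ-pinning model with nearest-neighbor Gaussian-type interaction, let f(k) = ψ_k(0) ~ 1/√(2πk) be the tied-down return density, and for ε > 0 let λ(ε) > 0 be the unique solution of ε Σ_k e^{−λk} f(k) = 1. Then λ(ε) = ε²/2 + o(ε²) as ε → 0. -/
open Filter Topology Set MeasureTheory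

noncomputable def Hfun (x : ℝ) : ℝ := Real.exp (-x) / Real.sqrt x

lemma Hfun_nonneg (x : ℝ) : 0 ≤ Hfun x :=
  div_nonneg (Real.exp_pos _).le (Real.sqrt_nonneg _)

lemma Hfun_anti {x y : ℝ} (hx : 0 < x) (hxy : x ≤ y) : Hfun y ≤ Hfun x :=
  div_le_div₀ (Real.exp_pos _).le (Real.exp_le_exp.2 (by linarith))
    (Real.sqrt_pos.2 hx) (Real.sqrt_le_sqrt hxy)

lemma Hfun_integrableOn : IntegrableOn Hfun (Ioi 0) := by
  have h := Real.GammaIntegral_convergent (by norm_num : (0:ℝ) < 1/2)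
  refine h.congr_fun (fun x hx => ?_) measurableSet_Ioi
  have hx' : (0:ℝ) < x := hx
  dsimp only
  rw [Hfun, show (1/2 - 1 : ℝ) = -(1/2) by norm_num, Real.rpow_neg hx'.le,
    ← Real.sqrt_eq_rpow, div_eq_mul_inv]

lemma integral_Hfun : ∫ x in Ioi (0:ℝ), Hfun x = Real.sqrt Real.pi := by
  rw [← Real.Gamma_one_half_eq, Real.Gamma_eq_integral (by norm_num : (0:ℝ) < 1/2)]
  refine setIntegral_congr_fun measurableSet_Ioi (fun x hx => ?_)
  have hx' : (0:ℝ) < x := hx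
  rw [Hfun, show (1/2 - 1 : ℝ) = -(1/2) by norm_num, Real.rpow_neg hx'.le,
    ← Real.sqrt_eq_rpow, div_eq_mul_inv]

lemma b_eq {l : ℝ} (hl : 0 < l) (k : ℕ) :
    l * Hfun (l * ((k:ℝ)+1)) =
      Real.sqrt l * Real.exp (-l * ((k:ℝ)+1)) / Real.sqrt ((k:ℝ)+1) := by
  have hk : (0:ℝ) < (k:ℝ)+1 := by positivity
  rw [Hfun, Real.sqrt_mul hl.le]
  have h1 : Real.sqrt l ≠ 0 := ne_of_gt (Real.sqrt_pos.2 hl)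
  have h2 : Real.sqrt ((k:ℝ)+1) ≠ 0 := ne_of_gt (Real.sqrt_pos.2 hk)
  rw [show -l * ((k:ℝ)+1) = -(l*((k:ℝ)+1)) by ring]
  field_simp
  linear_combination (-1:ℝ) *
    Real.mul_self_sqrt hl.le

lemma summable_exp_aux {l : ℝ} (hl : 0 < l) :
    Summable (fun k : ℕ => Real.exp (-l * ((k:ℝ)+1))) := by
  have h : ∀ k : ℕ, Real.exp (-l * ((k:ℝ)+1)) = Real.exp (-l) * Real.exp (-l) ^ k := by
    intro k
    rw [← Real.exp_nat_mul, ← Real.exp_add]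
    congr 1; push_cast; ring
  simp only [h]
  exact (summable_geometric_of_lt_one (Real.exp_pos _).le
    (Real.exp_lt_one_iff.2 (by linarith))).mul_left _

lemma b_le {l : ℝ} (hl : 0 < l) (k : ℕ) :
    l * Hfun (l * ((k:ℝ)+1)) ≤ Real.sqrt l * Real.exp (-l * ((k:ℝ)+1)) := by
  rw [b_eq hl k]
  apply div_le_self (by positivity)
  rw [Real.one_le_sqrt]; push_cast; linarith [Nat.cast_nonneg (α := ℝ) k]

lemma b_nonneg {l : ℝ} (hl : 0 < l) (k : ℕ) : 0 ≤ l * Hfun (l * ((k:ℝ)+1)) :=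
  mul_nonneg hl.le (Hfun_nonneg _)

lemma summable_b {l : ℝ} (hl : 0 < l) :
    Summable (fun k : ℕ => l * Hfun (l * ((k:ℝ)+1))) :=
  Summable.of_nonneg_of_le (b_nonneg hl) (b_le hl) ((summable_exp_aux hl).mul_left _)

lemma b_le_sqrt {l : ℝ} (hl : 0 < l) (k : ℕ) :
    l * Hfun (l * ((k:ℝ)+1)) ≤ Real.sqrt l := by
  refine (b_le hl k).trans ?_
  have : Real.exp (-l * ((k:ℝ)+1)) ≤ 1 := Real.exp_le_one_iff.2 (by nlinarith)
  nlinarith [Real.sqrt_nonneg l]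

lemma B_le {l : ℝ} (hl : 0 < l) :
    ∑' k : ℕ, l * Hfun (l * ((k:ℝ)+1)) ≤ Real.sqrt Real.pi := by
  refine Summable.tsum_le_of_sum_range_le (summable_b hl) (fun n => ?_)
  set a : ℕ → ℝ := fun k => l * k with ha
  have hmono : ∀ k : ℕ, a k ≤ a (k+1) := by
    intro k; simp only [ha]; push_cast; nlinarith
  have hsub : ∀ k : ℕ, Ioc (a k) (a (k+1)) ⊆ Ioi (0:ℝ) := by
    intro k x hx
    have h0 : (0:ℝ) ≤ a k := by simp only [ha]; positivity
    exact lt_of_le_of_lt h0 hx.1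
  have hint : ∀ k : ℕ, IntervalIntegrable Hfun volume (a k) (a (k+1)) := by
    intro k
    rw [intervalIntegrable_iff_integrableOn_Ioc_of_le (hmono k)]
    exact Hfun_integrableOn.mono_set (hsub k)
  have key : ∀ k : ℕ, l * Hfun (l * ((k:ℝ)+1)) ≤ ∫ x in (a k)..(a (k+1)), Hfun x := by
    intro k
    have hak1 : a (k+1) = l * ((k:ℝ)+1) := by simp only [ha]; push_cast; ring
    rw [intervalIntegral.integral_of_le (hmono k)]
    have hc := setIntegral_ge_of_const_le (c := Hfun (a (k+1)))
      measurableSet_Ioc (by exact (measure_Ioc_lt_top).ne)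
      (fun x hx => Hfun_anti (hsub k hx) hx.2)
      (Hfun_integrableOn.mono_set (hsub k))
    rw [Real.volume_real_Ioc_of_le (hmono k), smul_eq_mul] at hc
    have hlen : a (k+1) - a k = l := by simp only [ha]; push_cast; ring
    rw [hlen] at hc
    rw [hak1] at hc ⊢
    linarith [hc]
  calc ∑ k ∈ Finset.range n, l * Hfun (l * ((k:ℝ)+1))
      ≤ ∑ k ∈ Finset.range n, ∫ x in (a k)..(a (k+1)), Hfun x :=
        Finset.sum_le_sum (fun k _ => key k)
    _ = ∫ x in (a 0)..(a n), Hfun x :=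
        intervalIntegral.sum_integral_adjacent_intervals (fun k _ => hint k)
    _ ≤ Real.sqrt Real.pi := by
        have ha0 : a 0 = 0 := by simp [ha]
        have han : 0 ≤ a n := by simp only [ha]; positivity
        rw [ha0, intervalIntegral.integral_of_le han, ← integral_Hfun]
        refine setIntegral_mono_set Hfun_integrableOn
          (Filter.Eventually.of_forall (fun x => Hfun_nonneg x))
          (HasSubset.Subset.eventuallyLE Ioc_subset_Ioi_self)

lemma integral_Ioc_zero_le {l : ℝ} (hl : 0 < l) :
    ∫ x in Ioc (0:ℝ) l, Hfun x ≤ 2 * Real.sqrt l := by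
  have hint2 : IntegrableOn (fun x : ℝ => x ^ (-(1/2) : ℝ)) (Ioc 0 l) := by
    rw [← intervalIntegrable_iff_integrableOn_Ioc_of_le hl.le]
    exact intervalIntegral.intervalIntegrable_rpow' (by norm_num)
  have h1 : ∫ x in Ioc (0:ℝ) l, Hfun x ≤ ∫ x in Ioc (0:ℝ) l, x ^ (-(1/2) : ℝ) := by
    refine setIntegral_mono_on (Hfun_integrableOn.mono_set Ioc_subset_Ioi_self)
      hint2 measurableSet_Ioc (fun x hx => ?_)
    rw [Hfun, Real.rpow_neg hx.1.le, ← Real.sqrt_eq_rpow, div_eq_mul_inv]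
    have hsx : 0 < Real.sqrt x := Real.sqrt_pos.2 hx.1
    nlinarith [Real.exp_le_one_iff.2 (by linarith [hx.1] : -x ≤ 0),
      (Real.exp_pos (-x)).le, inv_pos.2 hsx]
  have h2 : ∫ x in Ioc (0:ℝ) l, (x : ℝ) ^ (-(1/2) : ℝ) = 2 * Real.sqrt l := by
    rw [← intervalIntegral.integral_of_le hl.le,
      integral_rpow (Or.inl (by norm_num : (-1:ℝ) < -(1/2)))]
    rw [show (-(1/2) + 1 : ℝ) = 1/2 by norm_num,
      Real.zero_rpow (by norm_num : (1/2:ℝ) ≠ 0), ← Real.sqrt_eq_rpow]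
    ring
  linarith

lemma B_ge {l : ℝ} (hl : 0 < l) :
    Real.sqrt Real.pi - 2 * Real.sqrt l ≤ ∑' k : ℕ, l * Hfun (l * ((k:ℝ)+1)) := by
  -- Step 2 first: √π - 2√l ≤ ∫ Ioi l Hfun
  have hsplit : ∫ x in Ioi (0:ℝ), Hfun x
      = (∫ x in Ioc (0:ℝ) l, Hfun x) + ∫ x in Ioi l, Hfun x := by
    rw [← setIntegral_union (Ioc_disjoint_Ioi le_rfl) measurableSet_Ioi
      (Hfun_integrableOn.mono_set Ioc_subset_Ioi_self)
      (Hfun_integrableOn.mono_set (Ioi_subset_Ioi hl.le)),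
      Ioc_union_Ioi_eq_Ioi hl.le]
  have hIoi : Real.sqrt Real.pi - 2 * Real.sqrt l ≤ ∫ x in Ioi l, Hfun x := by
    have := integral_Ioc_zero_le hl
    have := integral_Hfun
    linarith
  -- Step 1: ∫ Ioi l ≤ tsum
  have hstep1 : ∫ x in Ioi l, Hfun x ≤ ∑' k : ℕ, l * Hfun (l * ((k:ℝ)+1)) := by
    set s : ℕ → Set ℝ := fun n => Ioc l (l * ((n:ℝ)+1)) with hs
    have hU : ⋃ n, s n = Ioi l := by
      ext x
      simp only [hs, mem_iUnion, mem_Ioc, mem_Ioi]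
      constructor
      · rintro ⟨n, h1, _⟩; exact h1
      · intro hx
        obtain ⟨n, hn⟩ := exists_nat_ge (x / l)
        refine ⟨n, hx, ?_⟩
        have : x / l ≤ (n:ℝ) + 1 := by linarith
        calc x = l * (x / l) := by field_simp
          _ ≤ l * ((n:ℝ)+1) := by nlinarith
    have hmono : Monotone s := by
      intro m n hmn
      apply Ioc_subset_Ioc le_rfl
      have : (m:ℝ) ≤ (n:ℝ) := Nat.cast_le.2 hmn
      nlinarith
    have hten := tendsto_setIntegral_of_monotone (μ := volume) (f := Hfun)
      (s := s) (fun n => measurableSet_Ioc) hmono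
      (by rw [hU]; exact Hfun_integrableOn.mono_set (Ioi_subset_Ioi hl.le))
    rw [hU] at hten
    refine le_of_tendsto' hten (fun n => ?_)
    -- ∫ in s n ≤ Σ_{k<n} l * Hfun (l*(k+1)) ≤ tsum
    set a : ℕ → ℝ := fun k => l * ((k:ℝ)+1) with ha
    have hmono' : ∀ k : ℕ, a k ≤ a (k+1) := by
      intro k; simp only [ha]; push_cast; nlinarith
    have hapos : ∀ k : ℕ, 0 < a k := by
      intro k; simp only [ha]; positivity
    have hsub : ∀ k : ℕ, Ioc (a k) (a (k+1)) ⊆ Ioi (0:ℝ) := by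
      intro k x hx; exact lt_trans (hapos k) hx.1
    have hint : ∀ k : ℕ, IntervalIntegrable Hfun volume (a k) (a (k+1)) := by
      intro k
      rw [intervalIntegrable_iff_integrableOn_Ioc_of_le (hmono' k)]
      exact Hfun_integrableOn.mono_set (hsub k)
    have key : ∀ k : ℕ, (∫ x in (a k)..(a (k+1)), Hfun x) ≤ l * Hfun (l * ((k:ℝ)+1)) := by
      intro k
      rw [intervalIntegral.integral_of_le (hmono' k)]
      have hc : ∫ x in Ioc (a k) (a (k+1)), Hfun x
          ≤ ∫ x in Ioc (a k) (a (k+1)), Hfun (a k) := by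
        refine setIntegral_mono_on (Hfun_integrableOn.mono_set (hsub k))
          (integrableOn_const measure_Ioc_lt_top.ne) measurableSet_Ioc
          (fun x hx => Hfun_anti (hapos k) hx.1.le)
      rw [setIntegral_const, Real.volume_real_Ioc_of_le (hmono' k), smul_eq_mul] at hc
      have hlen : a (k+1) - a k = l := by simp only [ha]; push_cast; ring
      rw [hlen] at hc
      exact hc
    have hchain : ∫ x in s n, Hfun x = ∑ k ∈ Finset.range n, ∫ x in (a k)..(a (k+1)), Hfun x := by
      rw [intervalIntegral.sum_integral_adjacent_intervals (fun k _ => hint k)]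
      have ha0 : a 0 = l := by simp [ha]
      have : a 0 ≤ a n := by
        simp only [ha]; push_cast
        nlinarith [Nat.cast_nonneg (α := ℝ) n]
      rw [intervalIntegral.integral_of_le this, ha0]
    calc ∫ x in s n, Hfun x
        = ∑ k ∈ Finset.range n, ∫ x in (a k)..(a (k+1)), Hfun x := hchain
      _ ≤ ∑ k ∈ Finset.range n, l * Hfun (l * ((k:ℝ)+1)) :=
          Finset.sum_le_sum (fun k _ => key k)
      _ ≤ ∑' k : ℕ, l * Hfun (l * ((k:ℝ)+1)) :=
          Summable.sum_le_tsum _ (fun k _ => b_nonneg hl k) (summable_b hl)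
  linarith

lemma B_tendsto :
    Tendsto (fun l : ℝ => ∑' k : ℕ, l * Hfun (l * ((k:ℝ)+1))) (𝓝[>] 0)
      (𝓝 (Real.sqrt Real.pi)) := by
  have h1 : Tendsto (fun l : ℝ => Real.sqrt Real.pi - 2 * Real.sqrt l) (𝓝[>] 0)
      (𝓝 (Real.sqrt Real.pi)) := by
    have hc : Continuous (fun l : ℝ => Real.sqrt Real.pi - 2 * Real.sqrt l) := by
      fun_prop
    have h2 : Tendsto (fun l : ℝ => Real.sqrt Real.pi - 2 * Real.sqrt l) (𝓝[>] (0:ℝ))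
        (𝓝 (Real.sqrt Real.pi - 2 * Real.sqrt 0)) :=
      (hc.tendsto 0).mono_left nhdsWithin_le_nhds
    simpa using h2
  refine tendsto_of_tendsto_of_tendsto_of_le_of_le' h1 tendsto_const_nhds ?_ ?_
  · filter_upwards [self_mem_nhdsWithin] with l hl
    exact B_ge hl
  · filter_upwards [self_mem_nhdsWithin] with l hl
    exact B_le hl

set_option maxHeartbeats 1000000 in
lemma key_tendsto (f : ℕ → ℝ) (hf_nonneg : ∀ k, 0 ≤ f k)
    (hf : Tendsto (fun k : ℕ => Real.sqrt k * f k) atTop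
      (𝓝 (Real.sqrt (2 * Real.pi))⁻¹)) :
    Tendsto (fun l : ℝ => Real.sqrt l * ∑' k : ℕ, Real.exp (-l * ((k:ℝ)+1)) * f (k+1))
      (𝓝[>] 0) (𝓝 (Real.sqrt 2)⁻¹) := by
  have hπ := Real.pi_pos
  set c : ℝ := (Real.sqrt (2 * Real.pi))⁻¹ with hc
  have hc_nonneg : 0 ≤ c := inv_nonneg.2 (Real.sqrt_nonneg _)
  have hcpi : c * Real.sqrt Real.pi = (Real.sqrt 2)⁻¹ := by
    rw [hc, Real.sqrt_mul (by norm_num : (0:ℝ) ≤ 2), mul_inv]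
    have hπ' : Real.sqrt Real.pi ≠ 0 := ne_of_gt (Real.sqrt_pos.2 hπ)
    field_simp
  set g : ℕ → ℝ := fun n => Real.sqrt n * f n with hg
  obtain ⟨M, hM⟩ : ∃ M : ℝ, ∀ k : ℕ, g k ≤ M := by
    obtain ⟨M, hM⟩ := hf.bddAbove_range
    exact ⟨M, fun k => hM (Set.mem_range_self k)⟩
  have hg_nonneg : ∀ n : ℕ, 0 ≤ g n := fun n => mul_nonneg (Real.sqrt_nonneg _) (hf_nonneg n)
  have hM0 : 0 ≤ M := le_trans (hg_nonneg 0) (hM 0)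
  have hgM : ∀ n, |g n - c| ≤ M + c := by
    intro n
    rw [abs_le]
    constructor
    · linarith [hg_nonneg n]
    · linarith [hM n]
  have hg1 : ∀ k : ℕ, g (k+1) = Real.sqrt ((k:ℝ)+1) * f (k+1) := by
    intro k
    rw [hg]
    push_cast
    ring_nf
  have hid : ∀ {l : ℝ}, 0 < l → ∀ k : ℕ,
      Real.sqrt l * (Real.exp (-l * ((k:ℝ)+1)) * f (k+1))
        = (l * Hfun (l * ((k:ℝ)+1))) * g (k+1) := by
    intro l hl k
    rw [b_eq hl k, hg1 k]
    have h2 : Real.sqrt ((k:ℝ)+1) ≠ 0 := ne_of_gt (Real.sqrt_pos.2 (by positivity))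
    field_simp
  rw [Metric.tendsto_nhds]
  intro δ hδ
  set δ₁ : ℝ := δ / (3 * (Real.sqrt Real.pi + 1)) with hδ₁
  have hδ₁pos : 0 < δ₁ := by rw [hδ₁]; positivity
  obtain ⟨N, hN⟩ : ∃ N : ℕ, ∀ n, N ≤ n → |g n - c| ≤ δ₁ := by
    obtain ⟨N, hN0⟩ := Metric.tendsto_atTop.1 hf δ₁ hδ₁pos
    refine ⟨N, fun n hn => ?_⟩
    have := hN0 n hn
    rw [Real.dist_eq] at this
    exact this.le
  set C : ℝ := ∑ k ∈ Finset.range N, |g (k+1) - c| with hC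
  have hC0 : 0 ≤ C := Finset.sum_nonneg fun _ _ => abs_nonneg _
  have hE1 : ∀ᶠ l : ℝ in 𝓝[>] 0, Real.sqrt l * C < δ/3 := by
    have hten : Tendsto (fun l : ℝ => Real.sqrt l * C) (𝓝[>] (0:ℝ))
        (𝓝 (Real.sqrt 0 * C)) :=
      ((Real.continuous_sqrt.mul continuous_const).tendsto 0).mono_left nhdsWithin_le_nhds
    rw [Real.sqrt_zero, zero_mul] at hten
    exact hten.eventually_lt_const (by positivity)
  have hE2 : ∀ᶠ l : ℝ in 𝓝[>] 0,
      c * |(∑' k : ℕ, l * Hfun (l * ((k:ℝ)+1))) - Real.sqrt Real.pi| < δ/3 := by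
    have h2 := Metric.tendsto_nhds.1 B_tendsto (δ/(3*(c+1))) (by positivity)
    filter_upwards [h2] with l hl
    rw [Real.dist_eq] at hl
    have h3 : c * |(∑' k : ℕ, l * Hfun (l * ((k:ℝ)+1))) - Real.sqrt Real.pi|
        ≤ c * (δ/(3*(c+1))) := mul_le_mul_of_nonneg_left hl.le hc_nonneg
    have h4 : c * (δ/(3*(c+1))) < δ/3 := by
      rw [show c * (δ/(3*(c+1))) = (c*δ)/(3*(c+1)) by ring,
        div_lt_div_iff₀ (by positivity) (by norm_num)]
      nlinarith
    linarith
  filter_upwards [hE1, hE2, self_mem_nhdsWithin] with l h1 h2 hl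
  have hl' : (0:ℝ) < l := hl
  have hbsum : Summable (fun k : ℕ => l * Hfun (l * ((k:ℝ)+1))) := summable_b hl'
  have hfM : ∀ k : ℕ, f (k+1) ≤ M := by
    intro k
    have h5 : f (k+1) ≤ g (k+1) := by
      rw [hg1 k]
      refine le_mul_of_one_le_left (hf_nonneg _) ?_
      rw [Real.one_le_sqrt]
      linarith [Nat.cast_nonneg (α := ℝ) k]
    exact h5.trans (hM _)
  have habs : Summable (fun k : ℕ => (l * Hfun (l * ((k:ℝ)+1))) * |g (k+1) - c|) := by
    refine Summable.of_nonneg_of_le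
      (fun k => mul_nonneg (b_nonneg hl' k) (abs_nonneg _))
      (fun k => mul_le_mul_of_nonneg_left (hgM (k+1)) (b_nonneg hl' k))
      (hbsum.mul_right (M+c))
  have hbg : Summable (fun k : ℕ => (l * Hfun (l * ((k:ℝ)+1))) * g (k+1)) := by
    refine Summable.of_nonneg_of_le
      (fun k => mul_nonneg (b_nonneg hl' k) (hg_nonneg _))
      (fun k => mul_le_mul_of_nonneg_left (hM (k+1)) (b_nonneg hl' k))
      (hbsum.mul_right M)
  have hbc : Summable (fun k : ℕ => (l * Hfun (l * ((k:ℝ)+1))) * c) := hbsum.mul_right c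
  have hbgc : Summable (fun k : ℕ => (l * Hfun (l * ((k:ℝ)+1))) * (g (k+1) - c)) := by
    refine (hbg.sub hbc).congr fun k => ?_
    ring
  have hTS : Real.sqrt l * (∑' k : ℕ, Real.exp (-l * ((k:ℝ)+1)) * f (k+1))
      = ∑' k : ℕ, (l * Hfun (l * ((k:ℝ)+1))) * g (k+1) := by
    rw [← tsum_mul_left]
    exact tsum_congr fun k => hid hl' k
  have hstep1 : (∑' k : ℕ, (l * Hfun (l * ((k:ℝ)+1))) * g (k+1))
      - c * (∑' k : ℕ, l * Hfun (l * ((k:ℝ)+1)))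
      = ∑' k : ℕ, (l * Hfun (l * ((k:ℝ)+1))) * (g (k+1) - c) := by
    calc (∑' k : ℕ, (l * Hfun (l * ((k:ℝ)+1))) * g (k+1))
        - c * (∑' k : ℕ, l * Hfun (l * ((k:ℝ)+1)))
        = (∑' k : ℕ, (l * Hfun (l * ((k:ℝ)+1))) * g (k+1))
          - (∑' k : ℕ, (l * Hfun (l * ((k:ℝ)+1))) * c) := by
            rw [tsum_mul_right, mul_comm]
      _ = ∑' k : ℕ, ((l * Hfun (l * ((k:ℝ)+1))) * g (k+1)
            - (l * Hfun (l * ((k:ℝ)+1))) * c) := (Summable.tsum_sub hbg hbc).symm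
      _ = ∑' k : ℕ, (l * Hfun (l * ((k:ℝ)+1))) * (g (k+1) - c) :=
            tsum_congr fun k => (mul_sub _ _ _).symm
  have hsplit := Summable.sum_add_tsum_nat_add
    (f := fun k : ℕ => (l * Hfun (l * ((k:ℝ)+1))) * |g (k+1) - c|) N habs
  have hhead : ∑ k ∈ Finset.range N, (l * Hfun (l * ((k:ℝ)+1))) * |g (k+1) - c|
      ≤ Real.sqrt l * C := by
    rw [hC, Finset.mul_sum]
    exact Finset.sum_le_sum fun k _ =>
      mul_le_mul_of_nonneg_right (b_le_sqrt hl' k) (abs_nonneg _)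
  have hshift : Summable (fun k : ℕ =>
      (l * Hfun (l * (((k+N:ℕ):ℝ)+1))) * |g ((k+N)+1) - c|) :=
    (summable_nat_add_iff N).2 habs
  have hbshift : Summable (fun k : ℕ => l * Hfun (l * (((k+N:ℕ):ℝ)+1))) :=
    (summable_nat_add_iff N).2 hbsum
  have htail : (∑' k : ℕ, (l * Hfun (l * (((k+N:ℕ):ℝ)+1))) * |g ((k+N)+1) - c|)
      ≤ δ₁ * Real.sqrt Real.pi := by
    have h6 : (∑' k : ℕ, (l * Hfun (l * (((k+N:ℕ):ℝ)+1))) * |g ((k+N)+1) - c|)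
        ≤ ∑' k : ℕ, (l * Hfun (l * (((k+N:ℕ):ℝ)+1))) * δ₁ := by
      refine Summable.tsum_le_tsum (fun k => ?_) hshift (hbshift.mul_right δ₁)
      exact mul_le_mul_of_nonneg_left (hN ((k+N)+1) (by omega)) (b_nonneg hl' _)
    have h7 : (∑' k : ℕ, l * Hfun (l * (((k+N:ℕ):ℝ)+1))) ≤ Real.sqrt Real.pi := by
      have h8 := Summable.sum_add_tsum_nat_add (f := fun k : ℕ => l * Hfun (l * ((k:ℝ)+1))) N hbsum
      have h9 : (0:ℝ) ≤ ∑ k ∈ Finset.range N, l * Hfun (l * ((k:ℝ)+1)) :=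
        Finset.sum_nonneg fun k _ => b_nonneg hl' k
      have h10 := B_le hl'
      linarith
    calc (∑' k : ℕ, (l * Hfun (l * (((k+N:ℕ):ℝ)+1))) * |g ((k+N)+1) - c|)
        ≤ ∑' k : ℕ, (l * Hfun (l * (((k+N:ℕ):ℝ)+1))) * δ₁ := h6
      _ = (∑' k : ℕ, l * Hfun (l * (((k+N:ℕ):ℝ)+1))) * δ₁ := tsum_mul_right
      _ ≤ Real.sqrt Real.pi * δ₁ := mul_le_mul_of_nonneg_right h7 hδ₁pos.le
      _ = δ₁ * Real.sqrt Real.pi := mul_comm _ _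
  have hstep2 : |∑' k : ℕ, (l * Hfun (l * ((k:ℝ)+1))) * (g (k+1) - c)|
      ≤ Real.sqrt l * C + δ₁ * Real.sqrt Real.pi := by
    have hnorm : ∀ k : ℕ, ‖(l * Hfun (l * ((k:ℝ)+1))) * (g (k+1) - c)‖
        = (l * Hfun (l * ((k:ℝ)+1))) * |g (k+1) - c| := by
      intro k
      rw [Real.norm_eq_abs, abs_mul, abs_of_nonneg (b_nonneg hl' k)]
    have hsum' : Summable (fun k : ℕ => ‖(l * Hfun (l * ((k:ℝ)+1))) * (g (k+1) - c)‖) :=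
      habs.congr fun k => (hnorm k).symm
    have h11 := norm_tsum_le_tsum_norm hsum'
    rw [Real.norm_eq_abs] at h11
    calc |∑' k : ℕ, (l * Hfun (l * ((k:ℝ)+1))) * (g (k+1) - c)|
        ≤ ∑' k : ℕ, ‖(l * Hfun (l * ((k:ℝ)+1))) * (g (k+1) - c)‖ := h11
      _ = ∑' k : ℕ, (l * Hfun (l * ((k:ℝ)+1))) * |g (k+1) - c| := tsum_congr hnorm
      _ = (∑ k ∈ Finset.range N, (l * Hfun (l * ((k:ℝ)+1))) * |g (k+1) - c|)
          + ∑' k : ℕ, (l * Hfun (l * (((k+N:ℕ):ℝ)+1))) * |g ((k+N)+1) - c| := hsplit.symm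
      _ ≤ Real.sqrt l * C + δ₁ * Real.sqrt Real.pi := add_le_add hhead htail
  have hδ₁π : δ₁ * Real.sqrt Real.pi < δ/3 := by
    rw [hδ₁, div_mul_eq_mul_div, div_lt_div_iff₀ (by positivity) (by norm_num)]
    nlinarith [Real.sqrt_nonneg Real.pi]
  rw [Real.dist_eq, ← hcpi]
  have hfinal : Real.sqrt l * (∑' k : ℕ, Real.exp (-l * ((k:ℝ)+1)) * f (k+1))
      - c * Real.sqrt Real.pi
      = (∑' k : ℕ, (l * Hfun (l * ((k:ℝ)+1))) * (g (k+1) - c))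
        + c * ((∑' k : ℕ, l * Hfun (l * ((k:ℝ)+1))) - Real.sqrt Real.pi) := by
    rw [hTS, ← hstep1]
    ring
  calc |Real.sqrt l * (∑' k : ℕ, Real.exp (-l * ((k:ℝ)+1)) * f (k+1))
      - c * Real.sqrt Real.pi|
      = |(∑' k : ℕ, (l * Hfun (l * ((k:ℝ)+1))) * (g (k+1) - c))
        + c * ((∑' k : ℕ, l * Hfun (l * ((k:ℝ)+1))) - Real.sqrt Real.pi)| := by
          rw [hfinal]
    _ ≤ |∑' k : ℕ, (l * Hfun (l * ((k:ℝ)+1))) * (g (k+1) - c)|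
        + |c * ((∑' k : ℕ, l * Hfun (l * ((k:ℝ)+1))) - Real.sqrt Real.pi)| := abs_add_le _ _
    _ = |∑' k : ℕ, (l * Hfun (l * ((k:ℝ)+1))) * (g (k+1) - c)|
        + c * |(∑' k : ℕ, l * Hfun (l * ((k:ℝ)+1))) - Real.sqrt Real.pi| := by
          rw [abs_mul, abs_of_nonneg hc_nonneg]
    _ < δ := by linarith [hstep2]

/-- If `f(k) ~ (2πk)^{-1/2}` and `λ(ε) > 0` solves
`ε ∑_{k≥1} e^{−λ(ε)k} f(k) = 1`, then `λ(ε) = ε²/2 + o(ε²)` as `ε → 0⁺`. -/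
theorem pinning_lambda_asymptotics
    (f : ℕ → ℝ) (hf_nonneg : ∀ k, 0 ≤ f k)
    (hf : Tendsto (fun k : ℕ => Real.sqrt k * f k) atTop
      (𝓝 (Real.sqrt (2 * Real.pi))⁻¹))
    (lam : ℝ → ℝ) (hlam_pos : ∀ ε : ℝ, 0 < ε → 0 < lam ε)
    (hlam : ∀ ε : ℝ, 0 < ε →
      ε * ∑' k : ℕ, Real.exp (-(lam ε) * ((k : ℝ) + 1)) * f (k + 1) = 1) :
    Tendsto (fun ε : ℝ => lam ε / ε ^ 2) (𝓝[>] 0) (𝓝 (1 / 2)) := by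
  have key := key_tendsto f hf_nonneg hf
  obtain ⟨M, hM⟩ := hf.bddAbove_range
  replace hM : ∀ k : ℕ, Real.sqrt k * f k ≤ M := fun k => hM (Set.mem_range_self k)
  have hM0 : (0:ℝ) ≤ M :=
    le_trans (mul_nonneg (Real.sqrt_nonneg _) (hf_nonneg 0)) (hM 0)
  have hfM : ∀ k : ℕ, f (k+1) ≤ M := by
    intro k
    have h1 : (1:ℝ) ≤ Real.sqrt ((k+1 : ℕ):ℝ) := by
      rw [Real.one_le_sqrt]
      push_cast
      linarith [Nat.cast_nonneg (α := ℝ) k]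
    calc f (k+1) ≤ Real.sqrt ((k+1:ℕ):ℝ) * f (k+1) :=
          le_mul_of_one_le_left (hf_nonneg _) h1
      _ ≤ M := hM (k+1)
  have hsum : ∀ l : ℝ, 0 < l →
      Summable (fun k : ℕ => Real.exp (-l * ((k:ℝ)+1)) * f (k+1)) := by
    intro l hl
    refine Summable.of_nonneg_of_le
      (fun k => mul_nonneg (Real.exp_pos _).le (hf_nonneg _))
      (fun k => mul_le_mul_of_nonneg_left (hfM k) (Real.exp_pos _).le)
      ((summable_exp_aux hl).mul_right M)
  have hSlam : ∀ ε : ℝ, 0 < ε →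
      (∑' k : ℕ, Real.exp (-(lam ε) * ((k:ℝ)+1)) * f (k+1)) = 1/ε := by
    intro ε hε
    rw [eq_div_iff hε.ne', mul_comm]
    exact hlam ε hε
  have hanti : ∀ a b : ℝ, 0 < a → a ≤ b →
      (∑' k : ℕ, Real.exp (-b * ((k:ℝ)+1)) * f (k+1))
        ≤ ∑' k : ℕ, Real.exp (-a * ((k:ℝ)+1)) * f (k+1) := by
    intro a b ha hab
    refine Summable.tsum_le_tsum (fun k => ?_) (hsum b (lt_of_lt_of_le ha hab)) (hsum a ha)
    refine mul_le_mul_of_nonneg_right (Real.exp_le_exp.2 ?_) (hf_nonneg _)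
    have hk : (0:ℝ) ≤ (k:ℝ)+1 := by positivity
    nlinarith
  have hlam0 : Tendsto lam (𝓝[>] (0:ℝ)) (𝓝[>] (0:ℝ)) := by
    rw [tendsto_nhdsWithin_iff]
    constructor
    · refine tendsto_order.2 ⟨fun a ha => ?_, fun b hb => ?_⟩
      · filter_upwards [self_mem_nhdsWithin] with ε hε
        exact lt_trans ha (hlam_pos ε hε)
      · set K : ℝ := ∑' k : ℕ, Real.exp (-b * ((k:ℝ)+1)) * f (k+1) with hK
        have hK0 : (0:ℝ) ≤ K :=
          tsum_nonneg fun k => mul_nonneg (Real.exp_pos _).le (hf_nonneg _)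
        filter_upwards [Ioo_mem_nhdsGT_of_mem
          (left_mem_Ico.2 (by positivity : (0:ℝ) < 1/(K+1)))] with ε hε
        by_contra hcon
        push_neg at hcon
        have h1 : (∑' k : ℕ, Real.exp (-(lam ε) * ((k:ℝ)+1)) * f (k+1)) ≤ K :=
          hanti b (lam ε) hb hcon
        rw [hSlam ε hε.1] at h1
        have h4 : K + 1 < 1/ε := by
          rw [lt_div_iff₀ hε.1]
          calc (K+1)*ε < (K+1) * (1/(K+1)) :=
                mul_lt_mul_of_pos_left hε.2 (by positivity)
            _ = 1 := mul_one_div_cancel (by positivity)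
        linarith
    · filter_upwards [self_mem_nhdsWithin] with ε hε
      exact hlam_pos ε hε
  have hcomp : Tendsto (fun ε : ℝ => Real.sqrt (lam ε)
      * ∑' k : ℕ, Real.exp (-(lam ε) * ((k:ℝ)+1)) * f (k+1)) (𝓝[>] 0)
      (𝓝 (Real.sqrt 2)⁻¹) := by
    have := key.comp hlam0
    simpa [Function.comp_def] using this
  have h5 : Tendsto (fun ε : ℝ => Real.sqrt (lam ε) * (1/ε)) (𝓝[>] (0:ℝ))
      (𝓝 (Real.sqrt 2)⁻¹) := by
    refine hcomp.congr' ?_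
    filter_upwards [self_mem_nhdsWithin] with ε hε
    rw [hSlam ε hε]
  have h6 := h5.mul h5
  have h7 : (Real.sqrt 2)⁻¹ * (Real.sqrt 2)⁻¹ = 1/2 := by
    rw [← mul_inv, Real.mul_self_sqrt (by norm_num : (0:ℝ) ≤ 2)]
    norm_num
  rw [h7] at h6
  refine h6.congr' ?_
  filter_upwards [self_mem_nhdsWithin] with ε hε
  have hl := (hlam_pos ε hε).le
  calc Real.sqrt (lam ε) * (1/ε) * (Real.sqrt (lam ε) * (1/ε))
      = (Real.sqrt (lam ε) * Real.sqrt (lam ε)) * (1/(ε*ε)) := by ring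
    _ = lam ε / ε^2 := by rw [Real.mul_self_sqrt hl, pow_two]; ring
end
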